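/- arXiv:2111.05508 — 5 statements merged into one kernel-verified Lean document; each statement's English description precedes it below -/
import Mathlib

section
/- Consider the bilinear game V(θ,φ) = θᵀAφ with A ∈ ℝ^{d×d} full rank (nonsingular). Define the Optimistic Mirror Descent dynamics θ_{t+1} = θ_t − 2η·Aφ_t + η·Aφ_{t−1} and φ_{t+1} = φ_t + 2η·Aᵀθ_t − η·Aᵀθ_{t−1}, with learning rate η = 1/(2√(2·λ_max(AAᵀ))). Suppose ‖(θ_0,φ_0)‖ ≤ δ and ‖(θ_1,φ_1)‖ ≤ δ. Then for every T ≥ ⌈16·(λ_max(AAᵀ)/λ_min(AAᵀ))·log(4√2·δ/ε)⌉ the iterate satisfies ‖(θ_T,φ_T)‖ ≤ ε, i.e. (θ_T,φ_T) lies in the Euclidean ball of radius ε around the origin. -/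
open Matrix

namespace OMDAux
variable {N : Type*} [Fintype N]

noncomputable def en (v : N → ℝ) : ℝ := Real.sqrt (v ⬝ᵥ v)

lemma dot_self_nonneg (v : N → ℝ) : 0 ≤ v ⬝ᵥ v :=
  Finset.sum_nonneg fun _ _ => mul_self_nonneg _

lemma en_nonneg (v : N → ℝ) : 0 ≤ en v := Real.sqrt_nonneg _

lemma en_sq (v : N → ℝ) : en v ^ 2 = v ⬝ᵥ v := Real.sq_sqrt (dot_self_nonneg v)

lemma en_eq_norm (v : N → ℝ) : en v = ‖(WithLp.equiv 2 (N → ℝ)).symm v‖ := by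
  rw [EuclideanSpace.norm_eq, en]
  congr 1
  simp [dotProduct, pow_two, Real.norm_eq_abs, abs_mul_abs_self]

lemma en_add_le (u v : N → ℝ) : en (u + v) ≤ en u + en v := by
  rw [en_eq_norm, en_eq_norm, en_eq_norm, WithLp.equiv_symm_apply, WithLp.toLp_add]
  exact norm_add_le _ _

lemma en_neg (v : N → ℝ) : en (-v) = en v := by
  rw [en, en, neg_dotProduct, dotProduct_neg, neg_neg]

lemma en_sub_le (u v : N → ℝ) : en (u - v) ≤ en u + en v := by
  rw [sub_eq_add_neg]
  exact (en_add_le u (-v)).trans (by rw [en_neg])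

lemma dot_le_en_mul_en (u v : N → ℝ) : u ⬝ᵥ v ≤ en u * en v := by
  have h := real_inner_le_norm ((WithLp.equiv 2 (N → ℝ)).symm u) ((WithLp.equiv 2 (N → ℝ)).symm v)
  rw [← en_eq_norm, ← en_eq_norm] at h
  refine le_trans (le_of_eq ?_) h
  simp [PiLp.inner_apply, dotProduct, RCLike.inner_apply, mul_comm]

lemma en_le_of_dot_le {v : N → ℝ} {c : ℝ} (h : v ⬝ᵥ v ≤ c ^ 2) (hc : 0 ≤ c) : en v ≤ c := by
  rw [en]
  calc Real.sqrt (v ⬝ᵥ v) ≤ Real.sqrt (c ^ 2) := Real.sqrt_le_sqrt h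
  _ = c := Real.sqrt_sq hc

lemma quad_transfer [DecidableEq N] (M : Matrix N N ℝ) (v : N → ℝ) :
    (M *ᵥ v) ⬝ᵥ (M *ᵥ v) = v ⬝ᵥ ((Mᵀ * M) *ᵥ v) := by
  rw [dotProduct_mulVec, ← vecMul_transpose, vecMul_vecMul, ← dotProduct_mulVec]

theorem key [DecidableEq N]
    (S B : Matrix N N ℝ) (hSt : Sᵀ = S) (hBt : Bᵀ = -B)
    (hSB : S * B = B * S) (hS2 : S * S = 1 + (4:ℝ) • (B * B))
    (smax : ℝ) (hsmax0 : 0 ≤ smax) (hsmax1 : smax ≤ 1)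
    (hub : ∀ v : N → ℝ, v ⬝ᵥ (S *ᵥ v) ≤ smax * (v ⬝ᵥ v))
    (hlb : ∀ v : N → ℝ, (Real.sqrt 2)⁻¹ * (v ⬝ᵥ v) ≤ v ⬝ᵥ (S *ᵥ v))
    (z : ℕ → N → ℝ)
    (hrec : ∀ t : ℕ, z (t + 2) = (1 + (2:ℝ) • B) *ᵥ z (t + 1) - B *ᵥ z t)
    (T : ℕ) :
    en (z T) ≤ Real.sqrt ((1 + smax) / 2) ^ T * (2 * Real.sqrt 2 * (en (z 0) + en (z 1))) := by
  set q : ℝ := (1 + smax) / 2 with hq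
  have hq0 : 0 ≤ q := by positivity
  have hq1 : q ≤ 1 := by rw [hq]; linarith
  have hsq2 : (0:ℝ) < Real.sqrt 2 := by positivity
  -- S is invertible
  have hdet : IsUnit S.det := by
    rw [isUnit_iff_ne_zero]
    intro h0
    obtain ⟨v, hv, hv0⟩ := (Matrix.exists_mulVec_eq_zero_iff).2 h0
    have h1 := hlb v
    rw [hv0, dotProduct_zero] at h1
    have h2 : v ⬝ᵥ v = 0 := by
      have hvv := dot_self_nonneg v
      nlinarith [inv_pos.2 hsq2]
    exact hv ((dotProduct_self_eq_zero).1 h2)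
  have hSSi : S * S⁻¹ = 1 := Matrix.mul_nonsing_inv S hdet
  have hSiS : S⁻¹ * S = 1 := Matrix.nonsing_inv_mul S hdet
  -- the two roots
  set rp : Matrix N N ℝ := (2⁻¹:ℝ) • (1 + (2:ℝ) • B + S) with hrp
  set rm : Matrix N N ℝ := (2⁻¹:ℝ) • (1 + (2:ℝ) • B - S) with hrm
  have hsum : rp + rm = 1 + (2:ℝ) • B := by
    rw [hrp, hrm, ← smul_add]
    have : (1 + (2:ℝ) • B + S) + (1 + (2:ℝ) • B - S) = (2:ℝ) • (1 + (2:ℝ) • B) := by module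
    rw [this, smul_smul]; norm_num
  have hdiff : rp - rm = S := by
    rw [hrp, hrm, ← smul_sub]
    have : (1 + (2:ℝ) • B + S) - (1 + (2:ℝ) • B - S) = (2:ℝ) • S := by module
    rw [this, smul_smul]; norm_num
  have hmul : rp * rm = B := by
    rw [hrp, hrm, smul_mul_smul_comm]
    have h : (1 + (2:ℝ) • B + S) * (1 + (2:ℝ) • B - S) = (4:ℝ) • B := by
      simp only [add_mul, mul_add, mul_sub, sub_mul, one_mul, mul_one, smul_mul_assoc,
        mul_smul_comm, hSB, hS2, smul_smul]
      module
    rw [h, smul_smul]; norm_num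
  have hmul' : rm * rp = B := by
    rw [hrp, hrm, smul_mul_smul_comm]
    have h : (1 + (2:ℝ) • B - S) * (1 + (2:ℝ) • B + S) = (4:ℝ) • B := by
      simp only [add_mul, mul_add, mul_sub, sub_mul, one_mul, mul_one, smul_mul_assoc,
        mul_smul_comm, hSB, hS2, smul_smul]
      module
    rw [h, smul_smul]; norm_num
  have hcomm : rp * rm = rm * rp := by rw [hmul, hmul']
  -- transposes
  have hrpT : rpᵀ * rp = (2⁻¹:ℝ) • (1 + S) := by
    rw [hrp, transpose_smul, smul_mul_smul_comm]
    have ht : (1 + (2:ℝ) • B + S)ᵀ = 1 - (2:ℝ) • B + S := by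
      simp [transpose_add, transpose_smul, hBt, hSt, sub_eq_add_neg]
    rw [ht]
    have h : (1 - (2:ℝ) • B + S) * (1 + (2:ℝ) • B + S) = (2:ℝ) • (1 + S) := by
      simp only [add_mul, mul_add, mul_sub, sub_mul, one_mul, mul_one, smul_mul_assoc,
        mul_smul_comm, hSB, hS2, smul_smul]
      module
    rw [h, smul_smul]; norm_num
  have hrmT : rmᵀ * rm = (2⁻¹:ℝ) • (1 - S) := by
    rw [hrm, transpose_smul, smul_mul_smul_comm]
    have ht : (1 + (2:ℝ) • B - S)ᵀ = 1 - (2:ℝ) • B - S := by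
      simp [transpose_sub, transpose_add, transpose_smul, hBt, hSt, sub_eq_add_neg]
    rw [ht]
    have h : (1 - (2:ℝ) • B - S) * (1 + (2:ℝ) • B - S) = (2:ℝ) • (1 - S) := by
      simp only [add_mul, mul_add, mul_sub, sub_mul, one_mul, mul_one, smul_mul_assoc,
        mul_smul_comm, hSB, hS2, smul_smul]
      module
    rw [h, smul_smul]; norm_num
  -- contraction per step
  have hcon_p : ∀ v : N → ℝ, (rp *ᵥ v) ⬝ᵥ (rp *ᵥ v) ≤ q * (v ⬝ᵥ v) := by
    intro v
    rw [quad_transfer, hrpT, smul_mulVec, dotProduct_smul, add_mulVec, one_mulVec,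
      dotProduct_add]
    have := hub v
    rw [hq]; simp only [smul_eq_mul]; linarith
  have hcon_m : ∀ v : N → ℝ, (rm *ᵥ v) ⬝ᵥ (rm *ᵥ v) ≤ q * (v ⬝ᵥ v) := by
    intro v
    rw [quad_transfer, hrmT, smul_mulVec, dotProduct_smul, sub_mulVec, one_mulVec,
      dotProduct_sub]
    have h1 := hlb v
    have h2 : (0:ℝ) ≤ (Real.sqrt 2)⁻¹ * (v ⬝ᵥ v) :=
      mul_nonneg (by positivity) (dot_self_nonneg v)
    have h3 := dot_self_nonneg v
    rw [hq]; simp only [smul_eq_mul]; nlinarith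
  -- en-level contraction
  have hen_p : ∀ v : N → ℝ, en (rp *ᵥ v) ≤ Real.sqrt q * en v := by
    intro v
    refine en_le_of_dot_le ?_ (mul_nonneg (Real.sqrt_nonneg _) (en_nonneg v))
    rw [mul_pow, Real.sq_sqrt hq0, en_sq]
    exact hcon_p v
  have hen_m : ∀ v : N → ℝ, en (rm *ᵥ v) ≤ Real.sqrt q * en v := by
    intro v
    refine en_le_of_dot_le ?_ (mul_nonneg (Real.sqrt_nonneg _) (en_nonneg v))
    rw [mul_pow, Real.sq_sqrt hq0, en_sq]
    exact hcon_m v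
  have hsq_le_one : Real.sqrt q ≤ 1 := by
    rw [show (1:ℝ) = Real.sqrt 1 by simp]
    exact Real.sqrt_le_sqrt hq1
  have hpow_p : ∀ (t : ℕ) (v : N → ℝ), en (rp ^ t *ᵥ v) ≤ Real.sqrt q ^ t * en v := by
    intro t
    induction t with
    | zero => intro v; simp
    | succ t ih =>
      intro v
      rw [pow_succ', ← mulVec_mulVec]
      calc en (rp *ᵥ (rp ^ t *ᵥ v)) ≤ Real.sqrt q * en (rp ^ t *ᵥ v) := hen_p _
      _ ≤ Real.sqrt q * (Real.sqrt q ^ t * en v) :=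
          mul_le_mul_of_nonneg_left (ih v) (Real.sqrt_nonneg _)
      _ = Real.sqrt q ^ (t + 1) * en v := by ring
  have hpow_m : ∀ (t : ℕ) (v : N → ℝ), en (rm ^ t *ᵥ v) ≤ Real.sqrt q ^ t * en v := by
    intro t
    induction t with
    | zero => intro v; simp
    | succ t ih =>
      intro v
      rw [pow_succ', ← mulVec_mulVec]
      calc en (rm *ᵥ (rm ^ t *ᵥ v)) ≤ Real.sqrt q * en (rm ^ t *ᵥ v) := hen_m _
      _ ≤ Real.sqrt q * (Real.sqrt q ^ t * en v) :=
          mul_le_mul_of_nonneg_left (ih v) (Real.sqrt_nonneg _)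
      _ = Real.sqrt q ^ (t + 1) * en v := by ring
  -- inverse bound
  have hSi_en : ∀ w : N → ℝ, en (S⁻¹ *ᵥ w) ≤ Real.sqrt 2 * en w := by
    intro w
    set u := S⁻¹ *ᵥ w with hu
    have huw : S *ᵥ u = w := by rw [hu, mulVec_mulVec, hSSi, one_mulVec]
    have h1 : (Real.sqrt 2)⁻¹ * (u ⬝ᵥ u) ≤ u ⬝ᵥ w := by
      have := hlb u; rwa [huw] at this
    have h2 : u ⬝ᵥ w ≤ en u * en w := dot_le_en_mul_en u w
    have h3 : en u ^ 2 = u ⬝ᵥ u := en_sq u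
    have h4 := en_nonneg u
    have h5 := en_nonneg w
    rcases eq_or_lt_of_le h4 with h | h
    · rw [← h]; positivity
    · have hinv : Real.sqrt 2 * (Real.sqrt 2)⁻¹ = 1 := mul_inv_cancel₀ (ne_of_gt hsq2)
      have h6 : en u * en u ≤ (Real.sqrt 2 * en w) * en u := by nlinarith
      exact le_of_mul_le_mul_right h6 h
  -- commutation with S⁻¹
  have hSrp : S * rp = rp * S := by
    rw [hrp, mul_smul_comm, smul_mul_assoc]
    congr 1
    simp only [mul_add, add_mul, mul_one, one_mul, mul_smul_comm, smul_mul_assoc, hSB]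
  have hSrm : S * rm = rm * S := by
    rw [hrm, mul_smul_comm, smul_mul_assoc]
    congr 1
    simp only [mul_sub, sub_mul, mul_add, add_mul, mul_one, one_mul, mul_smul_comm,
      smul_mul_assoc, hSB]
  have hSirp : rp * S⁻¹ = S⁻¹ * rp := by
    calc rp * S⁻¹ = S⁻¹ * S * rp * S⁻¹ := by rw [hSiS, one_mul]
    _ = S⁻¹ * (S * rp) * S⁻¹ := by rw [mul_assoc S⁻¹ S rp]
    _ = S⁻¹ * (rp * S) * S⁻¹ := by rw [hSrp]
    _ = S⁻¹ * rp * (S * S⁻¹) := by rw [mul_assoc, mul_assoc, mul_assoc]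
    _ = S⁻¹ * rp := by rw [hSSi, mul_one]
  have hSirm : rm * S⁻¹ = S⁻¹ * rm := by
    calc rm * S⁻¹ = S⁻¹ * S * rm * S⁻¹ := by rw [hSiS, one_mul]
    _ = S⁻¹ * (S * rm) * S⁻¹ := by rw [mul_assoc S⁻¹ S rm]
    _ = S⁻¹ * (rm * S) * S⁻¹ := by rw [hSrm]
    _ = S⁻¹ * rm * (S * S⁻¹) := by rw [mul_assoc, mul_assoc, mul_assoc]
    _ = S⁻¹ * rm := by rw [hSSi, mul_one]
  -- closed form
  obtain ⟨u1, hu1⟩ : ∃ u : N → ℝ, u = z 1 - rm *ᵥ z 0 := ⟨_, rfl⟩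
  obtain ⟨u2, hu2⟩ : ∃ u : N → ℝ, u = rp *ᵥ z 0 - z 1 := ⟨_, rfl⟩
  obtain ⟨cp, hcp⟩ : ∃ c : N → ℝ, c = S⁻¹ *ᵥ u1 := ⟨_, rfl⟩
  obtain ⟨cm, hcm⟩ : ∃ c : N → ℝ, c = S⁻¹ *ᵥ u2 := ⟨_, rfl⟩
  have hP2 : ∀ t : ℕ, (z t = rp ^ t *ᵥ cp + rm ^ t *ᵥ cm) ∧
      (z (t + 1) = rp ^ (t + 1) *ᵥ cp + rm ^ (t + 1) *ᵥ cm) := by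
    intro t
    induction t with
    | zero =>
      constructor
      · simp only [pow_zero, one_mulVec]
        rw [hcp, hcm, ← mulVec_add]
        have e : u1 + u2 = S *ᵥ z 0 := by
          rw [hu1, hu2, ← hdiff, sub_mulVec]; abel
        rw [e, mulVec_mulVec, hSiS, one_mulVec]
      · simp only [zero_add, pow_one]
        have e : rp *ᵥ u1 + rm *ᵥ u2 = S *ᵥ z 1 := by
          rw [hu1, hu2, mulVec_sub, mulVec_sub, mulVec_mulVec, mulVec_mulVec, hmul, hmul',
            ← hdiff, sub_mulVec]
          abel
        rw [hcp, hcm, mulVec_mulVec, mulVec_mulVec, hSirp, hSirm, ← mulVec_mulVec,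
          ← mulVec_mulVec, ← mulVec_add, e, mulVec_mulVec, hSiS, one_mulVec]
    | succ t ih =>
      refine ⟨ih.2, ?_⟩
      show z (t + 2) = rp ^ (t + 2) *ᵥ cp + rm ^ (t + 2) *ᵥ cm
      have e1 : rm * rp ^ (t + 1) = B * rp ^ t := by
        rw [pow_succ', ← mul_assoc, hmul']
      have e2 : rp * rp ^ (t + 1) = rp ^ (t + 2) := by
        rw [← pow_succ']
      have e1m : rp * rm ^ (t + 1) = B * rm ^ t := by
        rw [pow_succ', ← mul_assoc, hmul]
      have e2m : rm * rm ^ (t + 1) = rm ^ (t + 2) := by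
        rw [← pow_succ']
      have hid_p : (1 + (2:ℝ) • B) * rp ^ (t + 1) = rp ^ (t + 2) + B * rp ^ t := by
        rw [← hsum, add_mul, e1, e2]
      have hid_m : (1 + (2:ℝ) • B) * rm ^ (t + 1) = rm ^ (t + 2) + B * rm ^ t := by
        rw [← hsum, add_mul, e1m, e2m]; abel
      rw [hrec t, ih.1, ih.2, mulVec_add, mulVec_add, mulVec_mulVec, mulVec_mulVec,
        mulVec_mulVec, mulVec_mulVec, hid_p, hid_m, add_mulVec, add_mulVec]
      abel
  -- final assembly
  have hPT := (hP2 T).1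
  have h1 : en (z T) ≤ en (rp ^ T *ᵥ cp) + en (rm ^ T *ᵥ cm) := by
    rw [hPT]; exact en_add_le _ _
  have h2 := hpow_p T cp
  have h3 := hpow_m T cm
  have hz0 := en_nonneg (z 0)
  have hz1 := en_nonneg (z 1)
  have hbp : en (rm *ᵥ z 0) ≤ en (z 0) := by
    calc en (rm *ᵥ z 0) ≤ Real.sqrt q * en (z 0) := hen_m _
    _ ≤ 1 * en (z 0) := mul_le_mul_of_nonneg_right hsq_le_one hz0
    _ = en (z 0) := one_mul _
  have hbm : en (rp *ᵥ z 0) ≤ en (z 0) := by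
    calc en (rp *ᵥ z 0) ≤ Real.sqrt q * en (z 0) := hen_p _
    _ ≤ 1 * en (z 0) := mul_le_mul_of_nonneg_right hsq_le_one hz0
    _ = en (z 0) := one_mul _
  have hcp_le : en cp ≤ Real.sqrt 2 * (en (z 0) + en (z 1)) := by
    calc en cp ≤ Real.sqrt 2 * en u1 := by rw [hcp]; exact hSi_en u1
    _ ≤ Real.sqrt 2 * (en (z 0) + en (z 1)) := by
        refine mul_le_mul_of_nonneg_left ?_ (Real.sqrt_nonneg _)
        calc en u1 ≤ en (z 1) + en (rm *ᵥ z 0) := by rw [hu1]; exact en_sub_le _ _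
        _ ≤ en (z 0) + en (z 1) := by linarith
  have hcm_le : en cm ≤ Real.sqrt 2 * (en (z 0) + en (z 1)) := by
    calc en cm ≤ Real.sqrt 2 * en u2 := by rw [hcm]; exact hSi_en u2
    _ ≤ Real.sqrt 2 * (en (z 0) + en (z 1)) := by
        refine mul_le_mul_of_nonneg_left ?_ (Real.sqrt_nonneg _)
        calc en u2 ≤ en (rp *ᵥ z 0) + en (z 1) := by rw [hu2]; exact en_sub_le _ _
        _ ≤ en (z 0) + en (z 1) := by linarith
  have hqT : (0:ℝ) ≤ Real.sqrt q ^ T := by positivity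
  calc en (z T) ≤ en (rp ^ T *ᵥ cp) + en (rm ^ T *ᵥ cm) := h1
  _ ≤ Real.sqrt q ^ T * en cp + Real.sqrt q ^ T * en cm := by linarith
  _ ≤ Real.sqrt q ^ T * (Real.sqrt 2 * (en (z 0) + en (z 1)))
      + Real.sqrt q ^ T * (Real.sqrt 2 * (en (z 0) + en (z 1))) := by
      have := mul_le_mul_of_nonneg_left hcp_le hqT
      have := mul_le_mul_of_nonneg_left hcm_le hqT
      linarith
  _ = Real.sqrt q ^ T * (2 * Real.sqrt 2 * (en (z 0) + en (z 1))) := by ring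

lemma ctr {d : ℕ} (M : Matrix (Fin d) (Fin d) ℝ) : Mᴴ = Mᵀ := by
  ext i j; simp [Matrix.conjTranspose]

lemma quad_diag {d : ℕ} (U : Matrix (Fin d) (Fin d) ℝ) (c : Fin d → ℝ) (x : Fin d → ℝ) :
    x ⬝ᵥ ((U * diagonal c * Uᵀ) *ᵥ x) = ∑ i, c i * ((Uᵀ *ᵥ x) i) ^ 2 := by
  rw [← mulVec_mulVec, ← mulVec_mulVec, dotProduct_mulVec, ← mulVec_transpose]
  simp only [dotProduct, mulVec_diagonal]
  refine Finset.sum_congr rfl fun i _ => by ring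

lemma dot_self_diag {d : ℕ} (U : Matrix (Fin d) (Fin d) ℝ) (hUU : U * Uᵀ = 1)
    (x : Fin d → ℝ) : x ⬝ᵥ x = ∑ i, ((Uᵀ *ᵥ x) i) ^ 2 := by
  have h := quad_transfer Uᵀ x
  rw [transpose_transpose, hUU, one_mulVec] at h
  rw [← h]
  simp only [dotProduct]
  refine Finset.sum_congr rfl fun i _ => by ring

end OMDAux

open OMDAux

set_option maxHeartbeats 2000000 in
/-- **OMD for bilinear games.** For the bilinear game `V(θ,φ) = θᵀAφ` with
`A` nonsingular, the Optimistic Mirror Descent dynamics with learning rate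
`η = 1/(2√(2 λ_max(AAᵀ)))` and bounded initial iterates reaches the ε-ball around the
origin after `T ≥ ⌈16 (λ_max/λ_min) log(4√2 δ/ε)⌉` iterations. -/
theorem stmt1 (d : ℕ) (A : Matrix (Fin d) (Fin d) ℝ) (hA : A.det ≠ 0)
    (lmax lmin : ℝ)
    (hlmax : IsGreatest (spectrum ℝ (A * Aᵀ)) lmax)
    (hlmin : IsLeast (spectrum ℝ (A * Aᵀ)) lmin)
    (η δ ε : ℝ) (hη : η = 1 / (2 * Real.sqrt (2 * lmax)))
    (hδ : 0 < δ) (hε : 0 < ε) (hεδ : ε < δ)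
    (θ φ : ℕ → EuclideanSpace ℝ (Fin d))
    (hθ : ∀ t : ℕ, 1 ≤ t →
      θ (t + 1) = θ t - (2 * η) • (WithLp.equiv 2 (Fin d → ℝ)).symm
          (A.mulVec (WithLp.equiv 2 (Fin d → ℝ) (φ t)))
        + η • (WithLp.equiv 2 (Fin d → ℝ)).symm
          (A.mulVec (WithLp.equiv 2 (Fin d → ℝ) (φ (t - 1)))))
    (hφ : ∀ t : ℕ, 1 ≤ t →
      φ (t + 1) = φ t + (2 * η) • (WithLp.equiv 2 (Fin d → ℝ)).symm
          (Aᵀ.mulVec (WithLp.equiv 2 (Fin d → ℝ) (θ t)))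
        - η • (WithLp.equiv 2 (Fin d → ℝ)).symm
          (Aᵀ.mulVec (WithLp.equiv 2 (Fin d → ℝ) (θ (t - 1)))))
    (h0 : Real.sqrt (‖θ 0‖ ^ 2 + ‖φ 0‖ ^ 2) ≤ δ)
    (h1 : Real.sqrt (‖θ 1‖ ^ 2 + ‖φ 1‖ ^ 2) ≤ δ)
    (T : ℕ)
    (hT : (⌈16 * (lmax / lmin) * Real.log (4 * Real.sqrt 2 * δ / ε)⌉ : ℤ) ≤ (T : ℤ)) :
    Real.sqrt (‖θ T‖ ^ 2 + ‖φ T‖ ^ 2) ≤ ε := by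
  -- spectral setup
  have hG : (A * Aᵀ).IsHermitian := by
    have := Matrix.isHermitian_mul_conjTranspose_self A
    rwa [ctr] at this
  obtain ⟨U, hUdef⟩ : ∃ M : Matrix (Fin d) (Fin d) ℝ, M = (hG.eigenvectorUnitary :
    Matrix (Fin d) (Fin d) ℝ) := ⟨_, rfl⟩
  obtain ⟨μ, hμdef⟩ : ∃ f : Fin d → ℝ, f = hG.eigenvalues := ⟨_, rfl⟩
  have hUUt : U * Uᵀ = 1 := by
    have h : (hG.eigenvectorUnitary : Matrix (Fin d) (Fin d) ℝ)
        * star (hG.eigenvectorUnitary : Matrix (Fin d) (Fin d) ℝ) = 1 :=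
      Unitary.mul_star_self_of_mem hG.eigenvectorUnitary.2
    rwa [Matrix.star_eq_conjTranspose, ctr, ← hUdef] at h
  have hUtU : Uᵀ * U = 1 := by
    have h : star (hG.eigenvectorUnitary : Matrix (Fin d) (Fin d) ℝ)
        * (hG.eigenvectorUnitary : Matrix (Fin d) (Fin d) ℝ) = 1 :=
      Unitary.star_mul_self_of_mem hG.eigenvectorUnitary.2
    rwa [Matrix.star_eq_conjTranspose, ctr, ← hUdef] at h
  have hspec : A * Aᵀ = U * diagonal μ * Uᵀ := by
    have h := hG.spectral_theorem
    rw [Unitary.conjStarAlgAut_apply, Matrix.star_eq_conjTranspose, ctr] at h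
    rw [hUdef, hμdef]
    simpa using h
  have hμle : ∀ i, μ i ≤ lmax := fun i => hlmax.2 (hμdef ▸ hG.eigenvalues_mem_spectrum_real i)
  have hμge : ∀ i, lmin ≤ μ i := fun i => hlmin.2 (hμdef ▸ hG.eigenvalues_mem_spectrum_real i)
  -- positivity of lmin
  have hlminpos : 0 < lmin := by
    have hmem := hlmin.1
    rw [spectrum.mem_iff] at hmem
    have hdet0 : (algebraMap ℝ (Matrix (Fin d) (Fin d) ℝ) lmin - A * Aᵀ).det = 0 := by
      by_contra hne
      exact hmem ((Matrix.isUnit_iff_isUnit_det _).2 (isUnit_iff_ne_zero.2 hne))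
    obtain ⟨v, hv0, hv⟩ := (Matrix.exists_mulVec_eq_zero_iff).2 hdet0
    have hAv : (A * Aᵀ) *ᵥ v = lmin • v := by
      rw [sub_mulVec] at hv
      have h1 : algebraMap ℝ (Matrix (Fin d) (Fin d) ℝ) lmin *ᵥ v = lmin • v := by
        rw [Matrix.algebraMap_eq_diagonal]
        funext i
        simp [mulVec_diagonal, Pi.algebraMap_apply]
      have h2 := sub_eq_zero.1 hv
      rw [h1] at h2; exact h2.symm
    have hq : lmin * (v ⬝ᵥ v) = (Aᵀ *ᵥ v) ⬝ᵥ (Aᵀ *ᵥ v) := by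
      rw [quad_transfer, transpose_transpose, hAv, dotProduct_smul, smul_eq_mul]
    have hAtv : Aᵀ *ᵥ v ≠ 0 := by
      intro h0'
      have hdetAt : Aᵀ.det ≠ 0 := by rwa [Matrix.det_transpose]
      exact hdetAt ((Matrix.exists_mulVec_eq_zero_iff).1 ⟨v, hv0, h0'⟩)
    have hpos : 0 < (Aᵀ *ᵥ v) ⬝ᵥ (Aᵀ *ᵥ v) := by
      rcases (dot_self_nonneg (Aᵀ *ᵥ v)).lt_or_eq with h | h
      · exact h
      · exact absurd ((dotProduct_self_eq_zero).1 h.symm) hAtv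
    have hvv : 0 < v ⬝ᵥ v := by
      rcases (dot_self_nonneg v).lt_or_eq with h | h
      · exact h
      · exact absurd ((dotProduct_self_eq_zero).1 h.symm) hv0
    nlinarith
  have hlmaxpos : 0 < lmax := lt_of_lt_of_le hlminpos (hlmax.2 hlmin.1)
  have hμpos : ∀ i, 0 < μ i := fun i => lt_of_lt_of_le hlminpos (hμge i)
  have hη2 : η ^ 2 = 1 / (8 * lmax) := by
    rw [hη, div_pow, mul_pow, Real.sq_sqrt (by positivity : (0:ℝ) ≤ 2 * lmax)]
    norm_num; ring
  have hηpos : 0 < η := by rw [hη]; positivity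
  have hdetA : IsUnit A.det := isUnit_iff_ne_zero.2 hA
  have hAi : A * A⁻¹ = 1 := Matrix.mul_nonsing_inv A hdetA
  have hiA : A⁻¹ * A = 1 := Matrix.nonsing_inv_mul A hdetA
  have hdetAt : IsUnit Aᵀ.det := isUnit_iff_ne_zero.2 (by rwa [Matrix.det_transpose])
  have hAti : Aᵀ * Aᵀ⁻¹ = 1 := Matrix.mul_nonsing_inv Aᵀ hdetAt
  have h4lmax : 4 * η ^ 2 * lmax = 1 / 2 := by
    rw [hη2]; field_simp; ring
  obtain ⟨g, hgdef⟩ : ∃ f : Fin d → ℝ, f = fun i => 1 - 4 * η ^ 2 * μ i := ⟨_, rfl⟩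
  have hg_lb : ∀ i, (2:ℝ)⁻¹ ≤ g i := by
    intro i
    have h1 : 4 * η ^ 2 * μ i ≤ 4 * η ^ 2 * lmax := by
      have := hμle i
      have h2 : (0:ℝ) ≤ 4 * η ^ 2 := by positivity
      nlinarith
    rw [h4lmax] at h1
    rw [hgdef]
    simp only []
    linarith
  have hg_ub : ∀ i, g i ≤ 1 - 4 * η ^ 2 * lmin := by
    intro i
    have := hμge i
    have h2 : (0:ℝ) ≤ 4 * η ^ 2 := by positivity
    rw [hgdef]
    simp only []
    nlinarith
  have hg_nonneg : ∀ i, (0:ℝ) ≤ g i := fun i => le_trans (by norm_num) (hg_lb i)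
  -- S₁
  obtain ⟨S₁, hS1def⟩ : ∃ M : Matrix (Fin d) (Fin d) ℝ,
      M = U * diagonal (fun i => Real.sqrt (g i)) * Uᵀ := ⟨_, rfl⟩
  have hUDU_mul : ∀ c c' : Fin d → ℝ, (U * diagonal c * Uᵀ) * (U * diagonal c' * Uᵀ)
      = U * diagonal (fun i => c i * c' i) * Uᵀ := by
    intro c c'
    calc (U * diagonal c * Uᵀ) * (U * diagonal c' * Uᵀ)
        = U * (diagonal c * ((Uᵀ * U) * (diagonal c' * Uᵀ))) := by
          simp only [Matrix.mul_assoc]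
    _ = U * (diagonal c * diagonal c') * Uᵀ := by
          rw [hUtU, Matrix.one_mul]
          simp only [Matrix.mul_assoc]
    _ = U * diagonal (fun i => c i * c' i) * Uᵀ := by
          rw [diagonal_mul_diagonal]
  have hS1t : S₁ᵀ = S₁ := by
    rw [hS1def, transpose_mul, transpose_mul, transpose_transpose, diagonal_transpose,
      Matrix.mul_assoc]
  have hdiagg : diagonal g = 1 - (4 * η ^ 2) • diagonal μ := by
    rw [← diagonal_one, ← diagonal_smul, diagonal_sub]
    congr 1
  have hS1sq : S₁ * S₁ = 1 - (4 * η ^ 2) • (A * Aᵀ) := by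
    rw [hS1def, hUDU_mul]
    have e : (fun i => Real.sqrt (g i) * Real.sqrt (g i)) = g := by
      funext i; exact Real.mul_self_sqrt (hg_nonneg i)
    rw [e, hdiagg, hspec, Matrix.mul_sub, Matrix.sub_mul, Matrix.mul_one, mul_smul_comm,
      smul_mul_assoc, hUUt]
  have hS1G : S₁ * (A * Aᵀ) = (A * Aᵀ) * S₁ := by
    rw [hS1def, hspec, hUDU_mul, hUDU_mul]
    have e : (fun i => Real.sqrt (g i) * μ i) = fun i => μ i * Real.sqrt (g i) := by
      funext i; ring
    rw [e]
  -- S₂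
  obtain ⟨S₂, hS2def⟩ : ∃ M : Matrix (Fin d) (Fin d) ℝ, M = A⁻¹ * S₁ * A := ⟨_, rfl⟩
  have h2 : A⁻¹ * S₁ * (A * Aᵀ) = Aᵀ * S₁ := by
    rw [Matrix.mul_assoc, hS1G, ← Matrix.mul_assoc, ← Matrix.mul_assoc, hiA, Matrix.one_mul]
  have h3 : A⁻¹ * S₁ * A = Aᵀ * S₁ * Aᵀ⁻¹ := by
    calc A⁻¹ * S₁ * A = A⁻¹ * S₁ * (A * (Aᵀ * Aᵀ⁻¹)) := by rw [hAti, Matrix.mul_one]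
    _ = A⁻¹ * S₁ * (A * Aᵀ) * Aᵀ⁻¹ := by simp only [Matrix.mul_assoc]
    _ = Aᵀ * S₁ * Aᵀ⁻¹ := by rw [h2]
  have hS2t : S₂ᵀ = S₂ := by
    rw [hS2def, transpose_mul, transpose_mul, hS1t, Matrix.transpose_nonsing_inv,
      ← Matrix.mul_assoc, ← h3]
  have hS1A : S₁ * A = A * S₂ := by
    rw [hS2def]
    calc S₁ * A = (A * A⁻¹) * S₁ * A := by rw [hAi, Matrix.one_mul]
    _ = A * (A⁻¹ * S₁ * A) := by simp only [Matrix.mul_assoc]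
  have hS2At : S₂ * Aᵀ = Aᵀ * S₁ := by
    rw [hS2def, Matrix.mul_assoc]
    exact h2
  have hS2sq : S₂ * S₂ = 1 - (4 * η ^ 2) • (Aᵀ * A) := by
    rw [hS2def]
    have e1 : A⁻¹ * S₁ * A * (A⁻¹ * S₁ * A) = A⁻¹ * (S₁ * S₁) * A := by
      calc A⁻¹ * S₁ * A * (A⁻¹ * S₁ * A)
          = A⁻¹ * (S₁ * ((A * A⁻¹) * (S₁ * A))) := by simp only [Matrix.mul_assoc]
      _ = A⁻¹ * (S₁ * S₁) * A := by rw [hAi, Matrix.one_mul]; simp only [Matrix.mul_assoc]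
    rw [e1, hS1sq, Matrix.mul_sub, Matrix.sub_mul, Matrix.mul_one, mul_smul_comm,
      smul_mul_assoc, hiA]
    congr 1
    congr 1
    calc A⁻¹ * (A * Aᵀ) * A = (A⁻¹ * A) * (Aᵀ * A) := by simp only [Matrix.mul_assoc]
    _ = Aᵀ * A := by rw [hiA, Matrix.one_mul]
  -- inverse of A * Aᵀ
  have hdetG : IsUnit (A * Aᵀ).det := by rw [Matrix.det_mul]; exact hdetA.mul hdetAt
  have hGi : (A * Aᵀ)⁻¹ = U * diagonal (fun i => (μ i)⁻¹) * Uᵀ := by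
    apply Matrix.inv_eq_right_inv
    rw [hspec, hUDU_mul]
    have e : (fun i => μ i * (μ i)⁻¹) = fun _ => (1:ℝ) :=
      funext fun i => mul_inv_cancel₀ (ne_of_gt (hμpos i))
    rw [e, diagonal_one, Matrix.mul_one, hUUt]
  have hAinv2 : A⁻¹ = Aᵀ * (A * Aᵀ)⁻¹ := by
    apply Matrix.inv_eq_right_inv
    rw [← Matrix.mul_assoc]
    exact Matrix.mul_nonsing_inv _ hdetG
  have hone : Aᵀ * ((A * Aᵀ)⁻¹ * A) = 1 := by
    rw [← Matrix.mul_assoc, ← hAinv2]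
    exact hiA
  have hK : (A * Aᵀ)⁻¹ * S₁ = U * diagonal (fun i => (μ i)⁻¹ * Real.sqrt (g i)) * Uᵀ := by
    rw [hGi, hS1def, hUDU_mul]
  -- block matrices
  obtain ⟨Sb, hSbdef⟩ : ∃ M : Matrix (Fin d ⊕ Fin d) (Fin d ⊕ Fin d) ℝ,
      M = fromBlocks S₁ 0 0 S₂ := ⟨_, rfl⟩
  obtain ⟨Bb, hBbdef⟩ : ∃ M : Matrix (Fin d ⊕ Fin d) (Fin d ⊕ Fin d) ℝ,
      M = fromBlocks 0 ((-η) • A) (η • Aᵀ) 0 := ⟨_, rfl⟩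
  have hSbt : Sbᵀ = Sb := by
    rw [hSbdef, fromBlocks_transpose, transpose_zero, hS1t, hS2t]
  have hBbt : Bbᵀ = -Bb := by
    rw [hBbdef, fromBlocks_transpose, fromBlocks_neg]
    simp [transpose_smul, neg_smul, neg_neg]
  have hSBb : Sb * Bb = Bb * Sb := by
    rw [hSbdef, hBbdef, fromBlocks_multiply, fromBlocks_multiply]
    simp only [Matrix.mul_zero, Matrix.zero_mul, add_zero, zero_add, mul_smul_comm,
      smul_mul_assoc, smul_zero, hS1A, hS2At]
  have hBB : Bb * Bb = fromBlocks ((-(η^2)) • (A * Aᵀ)) 0 0 ((-(η^2)) • (Aᵀ * A)) := by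
    rw [hBbdef, fromBlocks_multiply]
    simp only [Matrix.mul_zero, Matrix.zero_mul, add_zero, zero_add]
    rw [show ((-η)•A) * (η•Aᵀ) = (-(η^2)) • (A * Aᵀ) by
      rw [smul_mul_assoc, mul_smul_comm, smul_smul, show (-η)*η = -(η^2) by ring]]
    rw [show (η•Aᵀ) * ((-η)•A) = (-(η^2)) • (Aᵀ * A) by
      rw [smul_mul_assoc, mul_smul_comm, smul_smul, show η*(-η) = -(η^2) by ring]]
  have hSb2 : Sb * Sb = 1 + (4:ℝ) • (Bb * Bb) := by
    rw [hSbdef, fromBlocks_multiply, hBB, fromBlocks_smul, ← fromBlocks_one, fromBlocks_add]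
    simp only [Matrix.mul_zero, Matrix.zero_mul, add_zero, zero_add, smul_zero]
    simp only [smul_smul]
    rw [hS1sq, hS2sq, sub_eq_add_neg, sub_eq_add_neg, ← neg_smul, ← neg_smul,
      show -(4*η^2) = (4:ℝ) * -(η^2) by ring]
  -- quadratic form bounds
  obtain ⟨smax, hsmaxdef⟩ : ∃ r : ℝ, r = Real.sqrt (1 - 4 * η ^ 2 * lmin) := ⟨_, rfl⟩
  have hsmax0 : 0 ≤ smax := by rw [hsmaxdef]; exact Real.sqrt_nonneg _
  have hc_pos : 0 < η ^ 2 * lmin := by positivity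
  have hc18 : η ^ 2 * lmin ≤ 8⁻¹ := by
    rw [hη2]
    rw [div_mul_eq_mul_div, one_mul, div_le_iff₀ (by positivity : (0:ℝ) < 8 * lmax)]
    have := hlmax.2 hlmin.1
    nlinarith
  have hsmax1 : smax ≤ 1 := by
    rw [hsmaxdef]
    refine Real.sqrt_le_one.mpr ?_
    nlinarith
  have hS1ub : ∀ x : Fin d → ℝ, x ⬝ᵥ (S₁ *ᵥ x) ≤ smax * (x ⬝ᵥ x) := by
    intro x
    rw [hS1def, quad_diag, dot_self_diag U hUUt, Finset.mul_sum]
    refine Finset.sum_le_sum fun i _ => ?_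
    refine mul_le_mul_of_nonneg_right ?_ (sq_nonneg _)
    rw [hsmaxdef]
    exact Real.sqrt_le_sqrt (hg_ub i)
  have hS1lb : ∀ x : Fin d → ℝ, (Real.sqrt 2)⁻¹ * (x ⬝ᵥ x) ≤ x ⬝ᵥ (S₁ *ᵥ x) := by
    intro x
    rw [hS1def, quad_diag, dot_self_diag U hUUt, Finset.mul_sum]
    refine Finset.sum_le_sum fun i _ => ?_
    refine mul_le_mul_of_nonneg_right ?_ (sq_nonneg _)
    rw [← Real.sqrt_inv]
    exact Real.sqrt_le_sqrt (hg_lb i)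
  have hS2form : ∀ y : Fin d → ℝ, y ⬝ᵥ (S₂ *ᵥ y)
      = ∑ i, ((μ i)⁻¹ * Real.sqrt (g i)) * ((Uᵀ *ᵥ (A *ᵥ y)) i) ^ 2 := by
    intro y
    have e : y ⬝ᵥ (S₂ *ᵥ y) = (A *ᵥ y) ⬝ᵥ (((A * Aᵀ)⁻¹ * S₁) *ᵥ (A *ᵥ y)) := by
      rw [hS2def, hAinv2]
      rw [show Aᵀ * (A * Aᵀ)⁻¹ * S₁ * A = Aᵀ * (((A * Aᵀ)⁻¹ * S₁) * A) by
        simp only [Matrix.mul_assoc]]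
      rw [← Matrix.mulVec_mulVec, dotProduct_mulVec, vecMul_transpose, ← Matrix.mulVec_mulVec]
    rw [e, hK, quad_diag]
  have hS2dot : ∀ y : Fin d → ℝ, y ⬝ᵥ y = ∑ i, (μ i)⁻¹ * ((Uᵀ *ᵥ (A *ᵥ y)) i) ^ 2 := by
    intro y
    have e : (A *ᵥ y) ⬝ᵥ ((A * Aᵀ)⁻¹ *ᵥ (A *ᵥ y)) = y ⬝ᵥ y := by
      calc (A *ᵥ y) ⬝ᵥ ((A * Aᵀ)⁻¹ *ᵥ (A *ᵥ y))
          = (y ᵥ* Aᵀ) ⬝ᵥ ((A * Aᵀ)⁻¹ *ᵥ (A *ᵥ y)) := by rw [vecMul_transpose]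
      _ = y ⬝ᵥ (Aᵀ *ᵥ ((A * Aᵀ)⁻¹ *ᵥ (A *ᵥ y))) := by rw [← dotProduct_mulVec]
      _ = y ⬝ᵥ ((Aᵀ * (A * Aᵀ)⁻¹ * A) *ᵥ y) := by rw [mulVec_mulVec, mulVec_mulVec]
      _ = y ⬝ᵥ y := by rw [Matrix.mul_assoc, hone, one_mulVec]
    rw [← e, hGi, quad_diag]
  have hS2ub : ∀ y : Fin d → ℝ, y ⬝ᵥ (S₂ *ᵥ y) ≤ smax * (y ⬝ᵥ y) := by
    intro y
    rw [hS2form, hS2dot, Finset.mul_sum]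
    refine Finset.sum_le_sum fun i _ => ?_
    rw [show smax * ((μ i)⁻¹ * ((Uᵀ *ᵥ (A *ᵥ y)) i) ^ 2)
      = (smax * (μ i)⁻¹) * ((Uᵀ *ᵥ (A *ᵥ y)) i) ^ 2 by ring]
    refine mul_le_mul_of_nonneg_right ?_ (sq_nonneg _)
    have hμi := hμpos i
    have hsg : Real.sqrt (g i) ≤ smax := by
      rw [hsmaxdef]; exact Real.sqrt_le_sqrt (hg_ub i)
    rw [mul_comm smax _]
    exact mul_le_mul_of_nonneg_left hsg (le_of_lt (inv_pos.mpr hμi))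
  have hS2lb : ∀ y : Fin d → ℝ, (Real.sqrt 2)⁻¹ * (y ⬝ᵥ y) ≤ y ⬝ᵥ (S₂ *ᵥ y) := by
    intro y
    rw [hS2form, hS2dot, Finset.mul_sum]
    refine Finset.sum_le_sum fun i _ => ?_
    rw [show (Real.sqrt 2)⁻¹ * ((μ i)⁻¹ * ((Uᵀ *ᵥ (A *ᵥ y)) i) ^ 2)
      = ((Real.sqrt 2)⁻¹ * (μ i)⁻¹) * ((Uᵀ *ᵥ (A *ᵥ y)) i) ^ 2 by ring]
    refine mul_le_mul_of_nonneg_right ?_ (sq_nonneg _)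
    have hμi := hμpos i
    have hsg : (Real.sqrt 2)⁻¹ ≤ Real.sqrt (g i) := by
      rw [← Real.sqrt_inv]; exact Real.sqrt_le_sqrt (hg_lb i)
    calc (Real.sqrt 2)⁻¹ * (μ i)⁻¹ = (μ i)⁻¹ * (Real.sqrt 2)⁻¹ := by ring
    _ ≤ (μ i)⁻¹ * Real.sqrt (g i) :=
        mul_le_mul_of_nonneg_left hsg (le_of_lt (inv_pos.mpr hμi))
  -- assemble block quadratic bounds
  have hsplit : ∀ v : Fin d ⊕ Fin d → ℝ,
      v ⬝ᵥ (Sb *ᵥ v) = (v ∘ Sum.inl) ⬝ᵥ (S₁ *ᵥ (v ∘ Sum.inl))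
        + (v ∘ Sum.inr) ⬝ᵥ (S₂ *ᵥ (v ∘ Sum.inr)) := by
    intro v
    have hv : v = Sum.elim (v ∘ Sum.inl) (v ∘ Sum.inr) := by
      funext i; cases i <;> rfl
    conv_lhs => rw [hv, hSbdef, fromBlocks_mulVec]
    simp only [Sum.elim_comp_inl, Sum.elim_comp_inr, zero_mulVec, add_zero, zero_add,
      sumElim_dotProduct_sumElim]
  have hdsplit : ∀ v : Fin d ⊕ Fin d → ℝ,
      v ⬝ᵥ v = (v ∘ Sum.inl) ⬝ᵥ (v ∘ Sum.inl) + (v ∘ Sum.inr) ⬝ᵥ (v ∘ Sum.inr) := by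
    intro v
    have hv : v = Sum.elim (v ∘ Sum.inl) (v ∘ Sum.inr) := by
      funext i; cases i <;> rfl
    conv_lhs => rw [hv, sumElim_dotProduct_sumElim]
  have hub : ∀ v : Fin d ⊕ Fin d → ℝ, v ⬝ᵥ (Sb *ᵥ v) ≤ smax * (v ⬝ᵥ v) := by
    intro v
    rw [hsplit, hdsplit, mul_add]
    exact add_le_add (hS1ub _) (hS2ub _)
  have hlb : ∀ v : Fin d ⊕ Fin d → ℝ, (Real.sqrt 2)⁻¹ * (v ⬝ᵥ v) ≤ v ⬝ᵥ (Sb *ᵥ v) := by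
    intro v
    rw [hsplit, hdsplit, mul_add]
    exact add_le_add (hS1lb _) (hS2lb _)
  -- the combined trajectory
  obtain ⟨z, hz⟩ : ∃ z : ℕ → (Fin d ⊕ Fin d) → ℝ,
      ∀ t, z t = Sum.elim (WithLp.equiv 2 (Fin d → ℝ) (θ t))
        (WithLp.equiv 2 (Fin d → ℝ) (φ t)) := ⟨_, fun _ => rfl⟩
  have hrec : ∀ t : ℕ, z (t + 2) = (1 + (2:ℝ) • Bb) *ᵥ z (t + 1) - Bb *ᵥ z t := by
    intro t
    have h2 : t + 2 = t + 1 + 1 := rfl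
    rw [h2]
    have hθ' := hθ (t + 1) (Nat.le_add_left 1 t)
    have hφ' := hφ (t + 1) (Nat.le_add_left 1 t)
    simp only [Nat.add_sub_cancel] at hθ' hφ'
    have hBmul : ∀ s : ℕ, Bb *ᵥ z s
        = Sum.elim ((-η) • (A *ᵥ WithLp.equiv 2 (Fin d → ℝ) (φ s)))
          (η • (Aᵀ *ᵥ WithLp.equiv 2 (Fin d → ℝ) (θ s))) := by
      intro s
      rw [hz s, hBbdef, fromBlocks_mulVec]
      simp only [Sum.elim_comp_inl, Sum.elim_comp_inr, zero_mulVec, add_zero, zero_add,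
        smul_mulVec]
    funext i
    rw [add_mulVec, one_mulVec, smul_mulVec, hBmul (t + 1), hBmul t,
      hz (t + 1 + 1), hz (t + 1)]
    cases i with
    | inl j =>
      have hp := congrFun (congrArg (WithLp.equiv 2 (Fin d → ℝ)) hθ') j
      simp only [WithLp.equiv_apply, WithLp.ofLp_add, WithLp.ofLp_sub, WithLp.ofLp_smul,
        WithLp.equiv_symm_apply, WithLp.ofLp_toLp, Pi.add_apply, Pi.sub_apply, Pi.smul_apply,
        smul_eq_mul] at hp
      simp only [WithLp.equiv_apply, Pi.sub_apply, Pi.add_apply, Pi.smul_apply, Sum.elim_inl, smul_eq_mul]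
      rw [hp]
      ring
    | inr j =>
      have hp := congrFun (congrArg (WithLp.equiv 2 (Fin d → ℝ)) hφ') j
      simp only [WithLp.equiv_apply, WithLp.ofLp_add, WithLp.ofLp_sub, WithLp.ofLp_smul,
        WithLp.equiv_symm_apply, WithLp.ofLp_toLp, Pi.add_apply, Pi.sub_apply, Pi.smul_apply,
        smul_eq_mul] at hp
      simp only [WithLp.equiv_apply, Pi.sub_apply, Pi.add_apply, Pi.smul_apply, Sum.elim_inr, smul_eq_mul]
      rw [hp]
      ring
  -- norms
  have hnorm : ∀ t : ℕ, Real.sqrt (‖θ t‖ ^ 2 + ‖φ t‖ ^ 2) = en (z t) := by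
    intro t
    have hx : ‖θ t‖ ^ 2 = (WithLp.equiv 2 (Fin d → ℝ) (θ t)) ⬝ᵥ
        (WithLp.equiv 2 (Fin d → ℝ) (θ t)) := by
      rw [EuclideanSpace.norm_eq, Real.sq_sqrt (Finset.sum_nonneg fun i _ => sq_nonneg _)]
      simp only [dotProduct, Real.norm_eq_abs, sq_abs, WithLp.equiv_apply]
      exact Finset.sum_congr rfl fun i _ => by ring
    have hy : ‖φ t‖ ^ 2 = (WithLp.equiv 2 (Fin d → ℝ) (φ t)) ⬝ᵥ
        (WithLp.equiv 2 (Fin d → ℝ) (φ t)) := by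
      rw [EuclideanSpace.norm_eq, Real.sq_sqrt (Finset.sum_nonneg fun i _ => sq_nonneg _)]
      simp only [dotProduct, Real.norm_eq_abs, sq_abs, WithLp.equiv_apply]
      exact Finset.sum_congr rfl fun i _ => by ring
    rw [en, hz t, sumElim_dotProduct_sumElim, hx, hy]
  -- apply the key contraction lemma
  have hKey := key Sb Bb hSbt hBbt hSBb hSb2 smax hsmax0 hsmax1 hub hlb z hrec T
  -- numeric endgame
  obtain ⟨c, hcdef⟩ : ∃ r : ℝ, r = η ^ 2 * lmin := ⟨_, rfl⟩
  have hc_pos' : 0 < c := hcdef ▸ hc_pos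
  have hc18' : c ≤ 8⁻¹ := hcdef ▸ hc18
  have hsmax_le : smax ≤ 1 - 2 * c := by
    rw [hsmaxdef, hcdef]
    have h1 : 1 - 4 * η ^ 2 * lmin ≤ (1 - 2 * (η ^ 2 * lmin)) ^ 2 := by nlinarith
    calc Real.sqrt (1 - 4 * η ^ 2 * lmin) ≤ Real.sqrt ((1 - 2 * (η ^ 2 * lmin)) ^ 2) :=
          Real.sqrt_le_sqrt h1
    _ = 1 - 2 * (η ^ 2 * lmin) := Real.sqrt_sq (by nlinarith)
  have hq_le : (1 + smax) / 2 ≤ 1 - c := by linarith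
  have hq_nonneg : (0:ℝ) ≤ (1 + smax) / 2 := by linarith
  have hsqq : Real.sqrt ((1 + smax) / 2) ≤ Real.exp (-(c / 2)) := by
    have h1 : (1 + smax) / 2 ≤ Real.exp (-c) := by
      have := Real.add_one_le_exp (-c)
      linarith
    calc Real.sqrt ((1 + smax) / 2) ≤ Real.sqrt (Real.exp (-c)) := Real.sqrt_le_sqrt h1
    _ = Real.exp (-(c / 2)) := by
        rw [show -c = -(c/2) + -(c/2) by ring, Real.exp_add]
        exact Real.sqrt_mul_self (Real.exp_nonneg _)
  have hpowT : Real.sqrt ((1 + smax) / 2) ^ T ≤ Real.exp (-(c / 2) * T) := by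
    calc Real.sqrt ((1 + smax) / 2) ^ T ≤ Real.exp (-(c / 2)) ^ T :=
          pow_le_pow_left₀ (Real.sqrt_nonneg _) hsqq T
    _ = Real.exp (-(c / 2) * T) := by rw [← Real.exp_nat_mul]; ring_nf
  have hTge : 16 * (lmax / lmin) * Real.log (4 * Real.sqrt 2 * δ / ε) ≤ (T : ℝ) := by
    have := Int.ceil_le.mp hT
    exact_mod_cast this
  have hLT : Real.log (4 * Real.sqrt 2 * δ / ε) ≤ (T : ℝ) * (c / 2) := by
    have he : 16 * (lmax / lmin) * (c / 2) = 1 := by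
      rw [hcdef, hη2]
      field_simp
      ring
    have h1 : 16 * (lmax / lmin) * Real.log (4 * Real.sqrt 2 * δ / ε) * (c / 2)
        ≤ (T : ℝ) * (c / 2) :=
      mul_le_mul_of_nonneg_right hTge (by positivity)
    calc Real.log (4 * Real.sqrt 2 * δ / ε)
        = 16 * (lmax / lmin) * Real.log (4 * Real.sqrt 2 * δ / ε) * (c / 2) := by
          rw [show 16 * (lmax / lmin) * Real.log (4 * Real.sqrt 2 * δ / ε) * (c / 2)
            = (16 * (lmax / lmin) * (c / 2)) * Real.log (4 * Real.sqrt 2 * δ / ε) by ring,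
            he, one_mul]
    _ ≤ (T : ℝ) * (c / 2) := h1
  have hratio_pos : 0 < 4 * Real.sqrt 2 * δ / ε := by positivity
  have hexp_le : Real.exp (-(c / 2) * T) ≤ ε / (4 * Real.sqrt 2 * δ) := by
    have h1 : Real.exp (-(c / 2) * T) ≤ Real.exp (-Real.log (4 * Real.sqrt 2 * δ / ε)) := by
      apply Real.exp_le_exp.mpr
      nlinarith
    calc Real.exp (-(c / 2) * T) ≤ Real.exp (-Real.log (4 * Real.sqrt 2 * δ / ε)) := h1
    _ = (4 * Real.sqrt 2 * δ / ε)⁻¹ := by rw [Real.exp_neg, Real.exp_log hratio_pos]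
    _ = ε / (4 * Real.sqrt 2 * δ) := by
        rw [inv_div]
  -- initial bounds
  have hz0 : en (z 0) ≤ δ := by rw [← hnorm 0]; exact h0
  have hz1 : en (z 1) ≤ δ := by rw [← hnorm 1]; exact h1
  have hen0 := en_nonneg (z 0)
  have hen1 := en_nonneg (z 1)
  have hsqrt2pos : (0:ℝ) < Real.sqrt 2 := by positivity
  rw [hnorm T]
  calc en (z T) ≤ Real.sqrt ((1 + smax) / 2) ^ T * (2 * Real.sqrt 2 * (en (z 0) + en (z 1))) :=
        hKey
  _ ≤ Real.exp (-(c / 2) * T) * (2 * Real.sqrt 2 * (2 * δ)) := by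
      have hp : (0:ℝ) ≤ Real.sqrt ((1 + smax) / 2) ^ T := by positivity
      have h2 : 2 * Real.sqrt 2 * (en (z 0) + en (z 1)) ≤ 2 * Real.sqrt 2 * (2 * δ) := by
        have : en (z 0) + en (z 1) ≤ 2 * δ := by linarith
        nlinarith
      have h3 : (0:ℝ) ≤ 2 * Real.sqrt 2 * (2 * δ) := by positivity
      exact mul_le_mul hpowT h2 (by positivity) (Real.exp_nonneg _)
  _ ≤ (ε / (4 * Real.sqrt 2 * δ)) * (2 * Real.sqrt 2 * (2 * δ)) := by
      have h3 : (0:ℝ) ≤ 2 * Real.sqrt 2 * (2 * δ) := by positivity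
      exact mul_le_mul_of_nonneg_right hexp_le h3
  _ = ε := by
      rw [show (2:ℝ) * Real.sqrt 2 * (2 * δ) = 4 * Real.sqrt 2 * δ by ring]
      exact div_mul_cancel₀ ε (by positivity)
end

section
/- Let f: ℝⁿ → ℝ be a convex and β-smooth function attaining its minimum at x*. Then the iterates of Nesterov's Accelerated Gradient Descent, defined by y_{t+1} = x_t − (1/β)∇f(x_t) and x_{t+1} = y_{t+1} + ((t−1)/(t+2))·(y_{t+1} − y_t) starting from x_1 = y_1, satisfy f(y_t) − f(x*) ≤ 2β‖x_1 − x*‖²/t² for all t ≥ 1. -/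
open Set intervalIntegral

variable {E : Type*} [NormedAddCommGroup E] [InnerProductSpace ℝ E] [CompleteSpace E]

local notation "⟪" a ", " b "⟫" => @inner ℝ _ _ a b

lemma nag_line_deriv (f : E → ℝ) (hdiff : Differentiable ℝ f) (a v : E) (t : ℝ) :
    HasDerivAt (fun s : ℝ => f (a + s • v)) ⟪gradient f (a + t • v), v⟫ t := by
  have hline : HasDerivAt (fun s : ℝ => a + s • v) v t := by
    simpa using ((hasDerivAt_id t).smul_const v).const_add a
  have hF : HasFDerivAt f (InnerProductSpace.toDual ℝ E (gradient f (a + t • v))) (a + t • v) :=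
    hasGradientAt_iff_hasFDerivAt.mp (hdiff _).hasGradientAt
  have h : HasDerivAt (fun s : ℝ => f (a + s • v)) _ t := hF.comp_hasDerivAt t hline
  simpa using h

lemma nag_convex_ineq (f : E → ℝ) (hconv : ConvexOn ℝ Set.univ f)
    (hdiff : Differentiable ℝ f) (a b : E) :
    f a + ⟪gradient f a, b - a⟫ ≤ f b := by
  set v := b - a with hv
  have hd : HasDerivAt (fun s : ℝ => f (a + s • v)) ⟪gradient f a, v⟫ 0 := by
    simpa using nag_line_deriv f hdiff a v 0
  have ht : Filter.Tendsto (slope (fun s : ℝ => f (a + s • v)) 0) (nhdsWithin 0 (Ioi 0))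
      (nhds ⟪gradient f a, v⟫) :=
    (hasDerivAt_iff_tendsto_slope.mp hd).mono_left
      (nhdsWithin_mono _ (fun s hs => ne_of_gt hs))
  have hbound : ∀ᶠ s in nhdsWithin (0:ℝ) (Ioi 0), slope (fun s : ℝ => f (a + s • v)) 0 s ≤ f b - f a := by
    filter_upwards [Ioc_mem_nhdsGT_of_mem (by norm_num : (0:ℝ) ∈ Ico (0:ℝ) 1)] with s hs
    have hs0 : 0 < s := hs.1
    have hs1 : s ≤ 1 := hs.2
    have hcv := hconv.2 (mem_univ a) (mem_univ b) (by linarith : 0 ≤ 1 - s) hs0.le (by ring)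
    have heq : (1 - s) • a + s • b = a + s • v := by rw [hv]; module
    rw [heq] at hcv
    rw [slope_def_field]
    simp only [smul_eq_mul] at hcv
    rw [sub_zero, div_le_iff₀ hs0]
    simp only [zero_smul, add_zero]
    nlinarith [hcv]
  have := le_of_tendsto ht hbound
  linarith

lemma nag_descent (f : E → ℝ) (hdiff : Differentiable ℝ f) {β : ℝ} (hβ : 0 < β)
    (hsmooth : ∀ x y : E, ‖gradient f x - gradient f y‖ ≤ β * ‖x - y‖) (a b : E) :
    f b ≤ f a + ⟪gradient f a, b - a⟫ + β / 2 * ‖b - a‖ ^ 2 := by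
  set v := b - a with hv
  have hgc : Continuous fun s : ℝ => gradient f (a + s • v) := by
    apply LipschitzWith.continuous (K := (β * ‖v‖).toNNReal)
    apply LipschitzWith.of_dist_le_mul
    intro s s'
    have h1 := hsmooth (a + s • v) (a + s' • v)
    have h2 : ‖a + s • v - (a + s' • v)‖ = ‖v‖ * |s - s'| := by
      rw [show a + s • v - (a + s' • v) = (s - s') • v by module, norm_smul]
      simp [Real.norm_eq_abs, mul_comm]
    rw [dist_eq_norm, dist_eq_norm, Real.norm_eq_abs]
    calc ‖gradient f (a + s • v) - gradient f (a + s' • v)‖ ≤ β * (‖v‖ * |s - s'|) := by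
          rw [← h2]; exact h1
      _ ≤ (β * ‖v‖).toNNReal * |s - s'| := by
          rw [← mul_assoc]
          gcongr
          exact Real.le_coe_toNNReal _
  have hcont : Continuous fun s : ℝ => ⟪gradient f (a + s • v), v⟫ :=
    hgc.inner continuous_const
  have hftc : ∫ s in (0:ℝ)..1, ⟪gradient f (a + s • v), v⟫ = f b - f a := by
    have := intervalIntegral.integral_eq_sub_of_hasDerivAt
      (f := fun s : ℝ => f (a + s • v))
      (f' := fun s : ℝ => ⟪gradient f (a + s • v), v⟫)
      (fun t _ => nag_line_deriv f hdiff a v t) (hcont.intervalIntegrable 0 1)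
    rw [this]; simp [hv]
  have hmono : ∫ s in (0:ℝ)..1, ⟪gradient f (a + s • v), v⟫
      ≤ ∫ s in (0:ℝ)..1, (⟪gradient f a, v⟫ + β * s * ‖v‖ ^ 2) := by
    apply intervalIntegral.integral_mono_on (by norm_num)
      (hcont.intervalIntegrable 0 1)
      (((continuous_const.add ((continuous_const.mul continuous_id').mul continuous_const))).intervalIntegrable 0 1)
    intro s hs
    have key : ⟪gradient f (a + s • v) - gradient f a, v⟫ ≤ β * s * ‖v‖ ^ 2 := by
      calc ⟪gradient f (a + s • v) - gradient f a, v⟫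
          ≤ ‖gradient f (a + s • v) - gradient f a‖ * ‖v‖ := real_inner_le_norm _ _
        _ ≤ (β * ‖a + s • v - a‖) * ‖v‖ := by gcongr; exact hsmooth _ _
        _ = β * s * ‖v‖ ^ 2 := by
            rw [show a + s • v - a = s • v by module, norm_smul]
            simp [Real.norm_eq_abs, abs_of_nonneg hs.1]
            ring
    have := inner_sub_left (𝕜 := ℝ) (gradient f (a + s • v)) (gradient f a) v
    rw [this] at key
    simp only [Pi.add_apply, Pi.mul_apply]
    linarith
  have hrhs : ∫ s in (0:ℝ)..1, (⟪gradient f a, v⟫ + β * s * ‖v‖ ^ 2)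
      = ⟪gradient f a, v⟫ + β / 2 * ‖v‖ ^ 2 := by
    rw [intervalIntegral.integral_add (g := fun s : ℝ => β * s * ‖v‖ ^ 2) (intervalIntegrable_const)
      (((continuous_const.mul continuous_id').mul continuous_const).intervalIntegrable 0 1)]
    simp only [intervalIntegral.integral_const, smul_eq_mul, one_mul, sub_zero]
    have : ∫ s in (0:ℝ)..1, β * s * ‖v‖ ^ 2 = β / 2 * ‖v‖ ^ 2 := by
      rw [show (fun s : ℝ => β * s * ‖v‖ ^ 2) = fun s : ℝ => (β * ‖v‖ ^ 2) * s by ext s; ring]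
      rw [intervalIntegral.integral_const_mul, integral_id]
      ring
    rw [this]
  linarith [hftc ▸ (hrhs ▸ hmono)]

lemma nag_key (f : E → ℝ) (hconv : ConvexOn ℝ Set.univ f) (hdiff : Differentiable ℝ f)
    {β : ℝ} (hβ : 0 < β)
    (hsmooth : ∀ x y : E, ‖gradient f x - gradient f y‖ ≤ β * ‖x - y‖) (a z : E) :
    f (a - (1/β) • gradient f a) ≤ f z + ⟪gradient f a, a - z⟫
      - 1/(2*β) * ‖gradient f a‖ ^ 2 := by
  set g := gradient f a with hg
  have hdesc := nag_descent f hdiff hβ hsmooth a (a - (1/β) • g)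
  have he : a - (1/β) • g - a = -((1/β) • g) := by module
  rw [he] at hdesc
  have hi : ⟪g, -((1/β) • g)⟫ = -(1/β) * ‖g‖ ^ 2 := by
    rw [inner_neg_right, real_inner_smul_right, real_inner_self_eq_norm_sq]; ring
  have hn : ‖-((1/β) • g)‖ ^ 2 = (1/β) ^ 2 * ‖g‖ ^ 2 := by
    rw [norm_neg, norm_smul]
    simp [Real.norm_eq_abs, abs_of_pos (by positivity : (0:ℝ) < 1/β), mul_pow]
  rw [hi, hn] at hdesc
  have hconvi := nag_convex_ineq f hconv hdiff a z
  have hiz : ⟪g, z - a⟫ = -⟪g, a - z⟫ := by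
    rw [← inner_neg_right]; congr 1; module
  rw [hiz] at hconvi
  have hb : β / 2 * ((1/β)^2 * ‖g‖^2) = 1/(2*β) * ‖g‖^2 := by
    field_simp
  rw [hb] at hdesc
  have h2b : (1/β) * ‖g‖^2 = 2 * (1/(2*β) * ‖g‖^2) := by field_simp
  linarith [hdesc, hconvi]

lemma nag_step (f : E → ℝ) (hconv : ConvexOn ℝ Set.univ f) (hdiff : Differentiable ℝ f)
    {β : ℝ} (hβ : 0 < β)
    (hsmooth : ∀ x y : E, ‖gradient f x - gradient f y‖ ≤ β * ‖x - y‖)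
    (l : ℝ) (hl : 1 ≤ l) (xs ys xstar : E) :
    l^2 * (f (xs - (1/β) • gradient f xs) - f xstar)
      + β/2 * ‖l • (xs - (1/β) • gradient f xs) - (l-1) • ys - xstar‖^2
    ≤ (l^2 - l) * (f ys - f xstar) + β/2 * ‖l • xs - (l-1) • ys - xstar‖^2 := by
  set g := gradient f xs with hg
  set u := l • xs - (l-1) • ys - xstar with hu
  have hl0 : (0:ℝ) ≤ l := by linarith
  have hvec : l • (xs - (1/β) • g) - (l-1) • ys - xstar = u - (l/β) • g := by
    rw [hu]; module
  rw [hvec]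
  have hiu : ⟪u, (l/β) • g⟫ = (l/β) * ⟪g, u⟫ := by
    rw [real_inner_smul_right, real_inner_comm]
  have hns : ‖(l/β) • g‖^2 = (l/β)^2 * ‖g‖^2 := by
    rw [norm_smul]; rw [Real.norm_eq_abs, mul_pow, sq_abs]
  have hN : β/2 * ‖u - (l/β) • g‖^2
      = β/2 * ‖u‖^2 - l * ⟪g, u⟫ + l^2 * (1/(2*β) * ‖g‖^2) := by
    rw [norm_sub_sq_real, hiu, hns]; field_simp
  rw [hN]
  have hin : ⟪g, u⟫ = (l-1) * ⟪g, xs - ys⟫ + ⟪g, xs - xstar⟫ := by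
    rw [hu]
    simp only [inner_sub_right, real_inner_smul_right]
    ring
  rw [hin]
  have hk1 := nag_key f hconv hdiff hβ hsmooth xs ys
  have hk2 := nag_key f hconv hdiff hβ hsmooth xs xstar
  rw [← hg] at hk1 hk2
  have e1 : 0 ≤ l * (l - 1) * (f ys + ⟪g, xs - ys⟫ - 1/(2*β) * ‖g‖^2
      - f (xs - (1/β) • g)) :=
    mul_nonneg (mul_nonneg hl0 (by linarith)) (by linarith [hk1])
  have e2 : 0 ≤ l * (f xstar + ⟪g, xs - xstar⟫ - 1/(2*β) * ‖g‖^2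
      - f (xs - (1/β) • g)) :=
    mul_nonneg hl0 (by linarith [hk2])
  nlinarith [e1, e2]

/-- **Nesterov 1983.** For a convex `β`-smooth function `f` attaining its
minimum at `x*`, the iterates of Nesterov's Accelerated Gradient Descent
`y_{t+1} = x_t − (1/β)∇f(x_t)`, `x_{t+1} = y_{t+1} + ((t−1)/(t+2))(y_{t+1} − y_t)`
starting from `x_1 = y_1` satisfy `f(y_t) − f(x*) ≤ 2β‖x_1 − x*‖²/t²` for all `t ≥ 1`. -/
theorem stmt5 (n : ℕ) (f : EuclideanSpace ℝ (Fin n) → ℝ) (β : ℝ) (hβ : 0 < β)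
    (hconv : ConvexOn ℝ Set.univ f)
    (hdiff : Differentiable ℝ f)
    (hsmooth : ∀ x y : EuclideanSpace ℝ (Fin n),
      ‖gradient f x - gradient f y‖ ≤ β * ‖x - y‖)
    (xstar : EuclideanSpace ℝ (Fin n)) (hmin : ∀ x, f xstar ≤ f x)
    (x y : ℕ → EuclideanSpace ℝ (Fin n))
    (hinit : x 1 = y 1)
    (hy : ∀ t : ℕ, 1 ≤ t → y (t + 1) = x t - (1 / β) • gradient f (x t))
    (hx : ∀ t : ℕ, 1 ≤ t →
      x (t + 1) = y (t + 1) + (((t : ℝ) - 1) / ((t : ℝ) + 2)) • (y (t + 1) - y t)) :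
    ∀ t : ℕ, 1 ≤ t → f (y t) - f xstar ≤ 2 * β * ‖x 1 - xstar‖ ^ 2 / (t : ℝ) ^ 2 := by
  have hδ : ∀ s : ℕ, 0 ≤ f (y s) - f xstar := fun s => sub_nonneg.2 (hmin _)
  have hgrad0 : gradient f xstar = 0 := by
    have hloc : IsLocalMin f xstar := Filter.Eventually.of_forall (fun z => hmin z)
    have hfd := hloc.fderiv_eq_zero
    unfold gradient
    rw [hfd]
    simp
  have hδ1 : f (y 1) - f xstar ≤ β/2 * ‖x 1 - xstar‖^2 := by
    have hd := nag_descent f hdiff hβ hsmooth xstar (x 1)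
    rw [hgrad0] at hd
    simp only [inner_zero_left, add_zero] at hd
    rw [← hinit]
    linarith
  obtain ⟨u, hu⟩ : ∃ u : ℕ → EuclideanSpace ℝ (Fin n), ∀ s : ℕ,
      u s = (((s:ℝ)+1)/2) • x s - ((((s:ℝ)+1)/2) - 1) • y s - xstar := ⟨_, fun _ => rfl⟩
  have hstep : ∀ s : ℕ, 1 ≤ s →
      (((s:ℝ)+1)/2)^2 * (f (y (s+1)) - f xstar) + β/2 * ‖u (s+1)‖^2
      ≤ ((((s:ℝ)+1)/2)^2 - ((s:ℝ)+1)/2) * (f (y s) - f xstar) + β/2 * ‖u s‖^2 := by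
    intro s hs
    have hs1 : (1:ℝ) ≤ (s:ℝ) := by exact_mod_cast hs
    have hl : 1 ≤ ((s:ℝ)+1)/2 := by linarith
    have hns := nag_step f hconv hdiff hβ hsmooth (((s:ℝ)+1)/2) hl (x s) (y s) xstar
    have hueq : u (s+1) = (((s:ℝ)+1)/2) • y (s+1) - ((((s:ℝ)+1)/2) - 1) • y s - xstar := by
      have h2 := hu (s+1)
      push_cast at h2
      rw [h2, hx s hs]
      have hc : (((s:ℝ)+1+1)/2) * (((s:ℝ)-1)/((s:ℝ)+2)) = ((s:ℝ)+1)/2 - 1 := by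
        have h0 : (s:ℝ)+2 ≠ 0 := by linarith
        field_simp
        ring
      rw [smul_add, smul_smul, hc]
      module
    rw [hueq, hu s, hy s hs]
    exact hns
  have hΦ : ∀ s : ℕ, 2 ≤ s →
      ((s:ℝ)/2)^2 * (f (y s) - f xstar) + β/2 * ‖u s‖^2 ≤ β/2 * ‖x 1 - xstar‖^2 := by
    intro s hs
    induction s with
    | zero => omega
    | succ k ih =>
      rcases Nat.lt_or_ge k 2 with hk | hk
      · have hk1 : k = 1 := by omega
        subst hk1
        have h1 := hstep 1 le_rfl
        have hu1 : u 1 = x 1 - xstar := by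
          rw [hu 1]
          norm_num
        rw [hu1] at h1
        norm_num at h1 ⊢
        linarith [h1]
      · have hstep' := hstep k (by omega)
        have ihk := ih hk
        have hk0 : (2:ℝ) ≤ (k:ℝ) := by exact_mod_cast hk
        have hcoef : ((((k:ℝ)+1)/2)^2 - ((k:ℝ)+1)/2) ≤ ((k:ℝ)/2)^2 := by nlinarith
        have hmid : ((((k:ℝ)+1)/2)^2 - ((k:ℝ)+1)/2) * (f (y k) - f xstar)
            ≤ ((k:ℝ)/2)^2 * (f (y k) - f xstar) :=
          mul_le_mul_of_nonneg_right hcoef (hδ k)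
        push_cast
        calc (((k:ℝ)+1)/2)^2 * (f (y (k+1)) - f xstar) + β/2 * ‖u (k+1)‖^2
            ≤ ((((k:ℝ)+1)/2)^2 - ((k:ℝ)+1)/2) * (f (y k) - f xstar) + β/2 * ‖u k‖^2 := hstep'
          _ ≤ ((k:ℝ)/2)^2 * (f (y k) - f xstar) + β/2 * ‖u k‖^2 := by linarith
          _ ≤ β/2 * ‖x 1 - xstar‖^2 := ihk
  intro t ht
  rcases eq_or_lt_of_le ht with h1 | h2
  · rw [← h1]
    norm_num
    nlinarith [hδ1, sq_nonneg ‖x 1 - xstar‖, hβ]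
  · have ht2 : 2 ≤ t := h2
    have hb := hΦ t ht2
    have htR : (2:ℝ) ≤ (t:ℝ) := by exact_mod_cast ht2
    have htpos : (0:ℝ) < (t:ℝ)^2 := by nlinarith
    rw [le_div_iff₀ htpos]
    nlinarith [hb, sq_nonneg ‖u t‖, norm_nonneg (u t)]
end

section
/- Let s, t ∈ ℝ with 0 < s ≤ 1/√2 and |t| ≤ (1 − √(1 − s²))(1 − s²)/(2√(1 − s²) + 1/2). Then 1 ≥ t²/(1 − s²) + √(1 − s² + t²/(1 − s²)) + s|t|/√(1 − s²); equivalently, ((1/2)·√(1 − s² + t²/(1 − s²)) + 1/2)² + (s/2 + |t|/(2√(1 − s²)))² ≤ 1. -/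
/-- For `0 < s ≤ 1/√2` and
`|t| ≤ (1 − √(1 − s²))(1 − s²)/(2√(1 − s²) + 1/2)`, one has
`1 ≥ t²/(1 − s²) + √(1 − s² + t²/(1 − s²)) + s|t|/√(1 − s²)`; equivalently
`((1/2)√(1 − s² + t²/(1 − s²)) + 1/2)² + (s/2 + |t|/(2√(1 − s²)))² ≤ 1`. -/
theorem stmt13 (s t : ℝ) (h0 : 0 < s) (h1 : s ≤ 1 / Real.sqrt 2)
    (ht : |t| ≤ (1 - Real.sqrt (1 - s ^ 2)) * (1 - s ^ 2)
      / (2 * Real.sqrt (1 - s ^ 2) + 1 / 2)) :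
    (t ^ 2 / (1 - s ^ 2) + Real.sqrt (1 - s ^ 2 + t ^ 2 / (1 - s ^ 2))
        + s * |t| / Real.sqrt (1 - s ^ 2) ≤ 1) ∧
    ((1 / 2) * Real.sqrt (1 - s ^ 2 + t ^ 2 / (1 - s ^ 2)) + 1 / 2) ^ 2
        + (s / 2 + |t| / (2 * Real.sqrt (1 - s ^ 2))) ^ 2 ≤ 1 := by
  have h2 : (0:ℝ) < Real.sqrt 2 := Real.sqrt_pos.mpr (by norm_num)
  have h3 : s * Real.sqrt 2 ≤ 1 := (le_div_iff₀ h2).mp h1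
  have hsq2 : (Real.sqrt 2) ^ 2 = 2 := Real.sq_sqrt (by norm_num)
  have hs2 : s ^ 2 ≤ 1/2 := by nlinarith [mul_le_mul h3 h3 (by positivity) (by norm_num)]
  have hpos : (0:ℝ) < 1 - s ^ 2 := by nlinarith
  set c := Real.sqrt (1 - s ^ 2) with hc
  have hc0 : 0 < c := Real.sqrt_pos.mpr hpos
  have hc2 : c ^ 2 = 1 - s ^ 2 := Real.sq_sqrt hpos.le
  have hchalf : (1:ℝ)/2 ≤ c ^ 2 := by rw [hc2]; linarith
  have hc1 : c ≤ 1 := by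
    rw [show (1:ℝ) = Real.sqrt 1 by simp [Real.sqrt_one]]
    exact Real.sqrt_le_sqrt (by nlinarith)
  set v := |t| / c with hv
  have hv0 : 0 ≤ v := by positivity
  have hvdef : |t| = v * c := by rw [hv, div_mul_cancel₀ _ hc0.ne']
  have ht' : |t| * (2 * c + 1/2) ≤ (1 - c) * c ^ 2 := by
    have hd : (0:ℝ) < 2 * c + 1/2 := by linarith
    have := (le_div_iff₀ hd).mp ht
    rw [← hc2] at this
    linarith
  have hv1 : v * (2 * c + 1/2) ≤ (1 - c) * c := by
    have h' : v * c * (2 * c + 1/2) ≤ (1 - c) * c ^ 2 := by rw [← hvdef]; exact ht'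
    have h'' : v * (2 * c + 1/2) * c ≤ (1 - c) * c * c := by nlinarith [h']
    exact le_of_mul_le_mul_right h'' hc0
  -- r and its bound
  have harg : (0:ℝ) ≤ 1 - s ^ 2 + t ^ 2 / (1 - s ^ 2) := by positivity
  set r := Real.sqrt (1 - s ^ 2 + t ^ 2 / (1 - s ^ 2)) with hr
  have hr0 : 0 ≤ r := Real.sqrt_nonneg _
  have e1 : t ^ 2 / (1 - s ^ 2) = v ^ 2 := by
    rw [← hc2, hv, ← sq_abs t]
    field_simp
  have hr2 : r ^ 2 = c ^ 2 + v ^ 2 := by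
    rw [hr, Real.sq_sqrt harg, e1, ← hc2]
  have hB2 : (c + v ^ 2 / (2 * c)) ^ 2 = c ^ 2 + v ^ 2 + (v ^ 2 / (2 * c)) ^ 2 := by
    field_simp
    ring
  have hB0 : 0 ≤ c + v ^ 2 / (2 * c) := by positivity
  have hrle : r ≤ c + v ^ 2 / (2 * c) := by
    have hsq : r ^ 2 ≤ (c + v ^ 2 / (2 * c)) ^ 2 := by
      rw [hr2, hB2]; nlinarith [sq_nonneg (v ^ 2 / (2 * c))]
    exact (pow_le_pow_iff_left₀ hr0 hB0 two_ne_zero).mp hsq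
  -- key inequality
  have hw : v ^ 2 / (2 * c) * (2 * c) = v ^ 2 := by field_simp
  have hkey : v ^ 2 + (c + v ^ 2 / (2 * c)) + s * v ≤ 1 := by
    have hs1 : s ≤ 1 := by linarith [hs2, sq_nonneg (s-1)]
    have hv2 : 2 * c * v + v ≤ 2 * c := by
      linarith [hv1, mul_nonneg hv0 hc0.le, sq_nonneg c]
    have hA : v * (2 * c * v + v + 2 * c) ≤ v * (4 * c + 1) :=
      mul_le_mul_of_nonneg_left (by linarith) hv0
    have hB : 2 * (c * v) * s ≤ 2 * (c * v) * 1 :=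
      mul_le_mul_of_nonneg_left hs1 (by positivity)
    have hmain : 2 * c * v ^ 2 + v ^ 2 + 2 * c * s * v ≤ 2 * c - 2 * c ^ 2 := by
      linarith [hA, hB, hv1]
    have expand : (v ^ 2 + (c + v ^ 2 / (2 * c)) + s * v) * (2 * c)
        = 2 * c * v ^ 2 + 2 * c ^ 2 + v ^ 2 + 2 * c * s * v := by
      field_simp; ring
    have hgoal' : (v ^ 2 + (c + v ^ 2 / (2 * c)) + s * v) * (2 * c) ≤ 1 * (2 * c) := by
      rw [expand, one_mul]; linarith [hmain]
    exact le_of_mul_le_mul_right hgoal' (by positivity)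
  have e2 : s * |t| / c = s * v := by rw [hv, mul_div_assoc]
  have e3 : |t| / (2 * c) = v / 2 := by rw [hv, div_div, mul_comm]
  have g1 : t ^ 2 / (1 - s ^ 2) + r + s * |t| / c ≤ 1 := by
    rw [e1, e2]
    linarith [hrle, hkey]
  constructor
  · exact g1
  · rw [e1, e2] at g1
    rw [e3]
    linarith [hr2, hc2, g1]
end

section
/- Let s, t ∈ ℝ with 0 < s ≤ 1/√2 and |t| ≤ s²/10. Then √(S² + T²) < 1, where S = (1/2)·√((√((1−s²)² + 4t²) + 1 − s²)/2) + 1/2 and T = (1/2)·√((√((1−s²)² + 4t²) − 1 + s²)/2) + s/2. -/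
set_option maxHeartbeats 800000 in
private lemma stmt14_key (s τ u : ℝ) (h0 : 0 < s) (hs2 : s ^ 2 ≤ 1 / 2)
    (hτ : 0 ≤ τ) (hτb : τ ≤ s ^ 2 / 10) (hu_half : (1:ℝ)/2 ≤ u)
    (hu1 : u ≤ 1 - s ^ 2 / 2) (hu2 : u ^ 2 = 1 - s ^ 2) :
    (1/2 + u/2 + τ ^ 2) ^ 2 + (τ + s / 2) ^ 2 < 1 := by
  have hs1 : s ≤ 1 := by nlinarith
  have hu0 : u ≤ 1 := by nlinarith
  have hs4 : s ^ 4 ≤ s ^ 2 / 2 := by nlinarith [sq_nonneg s]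
  have hττ : τ ^ 2 ≤ s ^ 4 / 100 := by nlinarith
  have hτ2 : τ ^ 2 ≤ s ^ 2 / 200 := by nlinarith
  have hτ4 : τ ^ 4 ≤ s ^ 2 / 1000 := by nlinarith [sq_nonneg τ, sq_nonneg s, sq_nonneg (s^2)]
  have hτs : τ * s ≤ s ^ 2 / 10 := by nlinarith
  nlinarith [mul_nonneg (sq_nonneg τ) (by linarith : (0:ℝ) ≤ 1 - u), sq_nonneg s]

set_option maxHeartbeats 1600000 in
/-- For `0 < s ≤ 1/√2` and `|t| ≤ s²/10`, the eigenvalue bounds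
`S = (1/2)√((√((1−s²)² + 4t²) + 1 − s²)/2) + 1/2` and
`T = (1/2)√((√((1−s²)² + 4t²) − 1 + s²)/2) + s/2` satisfy `√(S² + T²) < 1`. -/
theorem stmt14 (s t : ℝ) (h0 : 0 < s) (h1 : s ≤ 1 / Real.sqrt 2)
    (ht : |t| ≤ s ^ 2 / 10) :
    Real.sqrt
        (((1 / 2) * Real.sqrt ((Real.sqrt ((1 - s ^ 2) ^ 2 + 4 * t ^ 2) + 1 - s ^ 2) / 2)
            + 1 / 2) ^ 2
          + ((1 / 2) * Real.sqrt ((Real.sqrt ((1 - s ^ 2) ^ 2 + 4 * t ^ 2) - 1 + s ^ 2) / 2)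
            + s / 2) ^ 2)
      < 1 := by
  have hs0 : (0:ℝ) ≤ s := h0.le
  have hs2 : s ^ 2 ≤ 1 / 2 := by
    have h := pow_le_pow_left₀ hs0 h1 2
    rwa [div_pow, one_pow, Real.sq_sqrt (by norm_num : (0:ℝ) ≤ 2)] at h
  have hs1 : s ≤ 1 := by nlinarith
  have htabs : 0 ≤ |t| := abs_nonneg t
  have ht2 : t ^ 2 ≤ s ^ 4 / 100 := by nlinarith [sq_abs t]
  have ha : (1:ℝ)/2 ≤ 1 - s ^ 2 := by linarith
  have hR : Real.sqrt ((1 - s ^ 2) ^ 2 + 4 * t ^ 2) ≤ (1 - s ^ 2) + 4 * t ^ 2 := by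
    have h := Real.sqrt_le_sqrt
      (show (1 - s ^ 2) ^ 2 + 4 * t ^ 2 ≤ ((1 - s ^ 2) + 4 * t ^ 2) ^ 2 by nlinarith)
    rwa [Real.sqrt_sq (by nlinarith)] at h
  have hRnn : 0 ≤ Real.sqrt ((1 - s ^ 2) ^ 2 + 4 * t ^ 2) := Real.sqrt_nonneg _
  set u := Real.sqrt (1 - s ^ 2) with hu_def
  have hu2 : u ^ 2 = 1 - s ^ 2 := Real.sq_sqrt (by linarith)
  have hu_pos : 0 < u := Real.sqrt_pos.mpr (by linarith)
  have hu_half : (1:ℝ)/2 ≤ u := by nlinarith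
  have hu1 : u ≤ 1 - s ^ 2 / 2 := by
    have h := Real.sqrt_le_sqrt (show 1 - s ^ 2 ≤ (1 - s ^ 2 / 2) ^ 2 by nlinarith)
    rwa [Real.sqrt_sq (by nlinarith)] at h
  have hS : Real.sqrt ((Real.sqrt ((1 - s ^ 2) ^ 2 + 4 * t ^ 2) + 1 - s ^ 2) / 2)
      ≤ u + 2 * t ^ 2 := by
    have hle : (Real.sqrt ((1 - s ^ 2) ^ 2 + 4 * t ^ 2) + 1 - s ^ 2) / 2
        ≤ (u + 2 * t ^ 2) ^ 2 := by
      nlinarith [mul_nonneg (sq_nonneg t) (by linarith : (0:ℝ) ≤ u - 1/2), sq_nonneg (t^2)]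
    have h := Real.sqrt_le_sqrt hle
    rwa [Real.sqrt_sq (by positivity)] at h
  have hT : Real.sqrt ((Real.sqrt ((1 - s ^ 2) ^ 2 + 4 * t ^ 2) - 1 + s ^ 2) / 2)
      ≤ 2 * |t| := by
    have hle : (Real.sqrt ((1 - s ^ 2) ^ 2 + 4 * t ^ 2) - 1 + s ^ 2) / 2
        ≤ (2 * |t|) ^ 2 := by
      nlinarith [sq_abs t]
    have h := Real.sqrt_le_sqrt hle
    rwa [Real.sqrt_sq (by positivity)] at h
  have hSnn : 0 ≤ Real.sqrt ((Real.sqrt ((1 - s ^ 2) ^ 2 + 4 * t ^ 2) + 1 - s ^ 2) / 2) :=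
    Real.sqrt_nonneg _
  have hTnn : 0 ≤ Real.sqrt ((Real.sqrt ((1 - s ^ 2) ^ 2 + 4 * t ^ 2) - 1 + s ^ 2) / 2) :=
    Real.sqrt_nonneg _
  have hlt : ((1 / 2) * Real.sqrt ((Real.sqrt ((1 - s ^ 2) ^ 2 + 4 * t ^ 2) + 1 - s ^ 2) / 2)
            + 1 / 2) ^ 2
          + ((1 / 2) * Real.sqrt ((Real.sqrt ((1 - s ^ 2) ^ 2 + 4 * t ^ 2) - 1 + s ^ 2) / 2)
            + s / 2) ^ 2 < 1 := by
    have hX : (0:ℝ) ≤ (1 / 2) * Real.sqrt ((Real.sqrt ((1 - s ^ 2) ^ 2 + 4 * t ^ 2) + 1 - s ^ 2) / 2)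
            + 1 / 2 := by positivity
    have hY : (0:ℝ) ≤ (1 / 2) * Real.sqrt ((Real.sqrt ((1 - s ^ 2) ^ 2 + 4 * t ^ 2) - 1 + s ^ 2) / 2)
            + s / 2 := by positivity
    have hXb : (1 / 2) * Real.sqrt ((Real.sqrt ((1 - s ^ 2) ^ 2 + 4 * t ^ 2) + 1 - s ^ 2) / 2)
            + 1 / 2 ≤ 1/2 + u/2 + t ^ 2 := by linarith
    have hYb : (1 / 2) * Real.sqrt ((Real.sqrt ((1 - s ^ 2) ^ 2 + 4 * t ^ 2) - 1 + s ^ 2) / 2)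
            + s / 2 ≤ |t| + s / 2 := by linarith
    have hmain := stmt14_key s |t| u h0 hs2 htabs ht hu_half hu1 hu2
    rw [sq_abs] at hmain
    have hXb2 := pow_le_pow_left₀ hX hXb 2
    have hYb2 := pow_le_pow_left₀ hY hYb 2
    linarith
  calc Real.sqrt _ < Real.sqrt 1 := Real.sqrt_lt_sqrt (by positivity) hlt
    _ = 1 := Real.sqrt_one
end

section
/- Let s, t ∈ ℝ with 1/√2 < s ≤ 1 and |t| ≤ s²/10. Then √(S² + T²) < 1, where S = (1/2)·√((√((1−s²)² + 4t²) + 1 − s²)/2) + 1/2 and T = (1/2)·√((√((1−s²)² + 4t²) − 1 + s²)/2) + s/2. -/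
set_option maxHeartbeats 1000000


/-- For `1/√2 < s ≤ 1` and `|t| ≤ s²/10`, the eigenvalue bounds
`S = (1/2)√((√((1−s²)² + 4t²) + 1 − s²)/2) + 1/2` and
`T = (1/2)√((√((1−s²)² + 4t²) − 1 + s²)/2) + s/2` satisfy `√(S² + T²) < 1`. -/
theorem stmt15 (s t : ℝ) (h0 : 1 / Real.sqrt 2 < s) (h1 : s ≤ 1)
    (ht : |t| ≤ s ^ 2 / 10) :
    Real.sqrt
        (((1 / 2) * Real.sqrt ((Real.sqrt ((1 - s ^ 2) ^ 2 + 4 * t ^ 2) + 1 - s ^ 2) / 2)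
            + 1 / 2) ^ 2
          + ((1 / 2) * Real.sqrt ((Real.sqrt ((1 - s ^ 2) ^ 2 + 4 * t ^ 2) - 1 + s ^ 2) / 2)
            + s / 2) ^ 2)
      < 1 := by
  have hs0 : 0 < s := lt_trans (by positivity) h0
  have hs2 : 1 / 2 < s ^ 2 := by
    have hsq : (1 / Real.sqrt 2) ^ 2 = 1 / 2 := by
      rw [div_pow, one_pow, Real.sq_sqrt (by norm_num : (0:ℝ) ≤ 2)]
    calc (1:ℝ)/2 = (1 / Real.sqrt 2) ^ 2 := hsq.symm
      _ < s ^ 2 := by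
        apply pow_lt_pow_left₀ h0 (by positivity) (by norm_num)
  have hp : 0 ≤ 1 - s ^ 2 := by nlinarith
  have hat0 : 0 ≤ |t| := abs_nonneg t
  have hat2 : |t| ^ 2 = t ^ 2 := sq_abs t
  set u := Real.sqrt ((1 - s ^ 2) ^ 2 + 4 * t ^ 2) with hu
  have hu0 : 0 ≤ u := Real.sqrt_nonneg _
  have hu_sq : u ^ 2 = (1 - s ^ 2) ^ 2 + 4 * t ^ 2 :=
    Real.sq_sqrt (by positivity)
  have hu_ge : 1 - s ^ 2 ≤ u := by nlinarith
  have hu_le : u ≤ (1 - s ^ 2) + 2 * |t| := by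
    have : (1 - s ^ 2) ^ 2 + 4 * t ^ 2 ≤ ((1 - s ^ 2) + 2 * |t|) ^ 2 := by nlinarith
    calc u ≤ Real.sqrt (((1 - s ^ 2) + 2 * |t|) ^ 2) := Real.sqrt_le_sqrt this
      _ = (1 - s ^ 2) + 2 * |t| := Real.sqrt_sq (by positivity)
  set A := Real.sqrt ((u + 1 - s ^ 2) / 2) with hA
  set B := Real.sqrt ((u - 1 + s ^ 2) / 2) with hB
  have hA0 : 0 ≤ A := Real.sqrt_nonneg _
  have hB0 : 0 ≤ B := Real.sqrt_nonneg _
  have hA2 : A ^ 2 = (u + 1 - s ^ 2) / 2 := Real.sq_sqrt (by nlinarith)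
  have hB2 : B ^ 2 = (u - 1 + s ^ 2) / 2 := Real.sq_sqrt (by nlinarith)
  have hA2' : A ^ 2 ≤ 1 - 9 * s ^ 2 / 10 := by nlinarith
  have hB2' : 10 * B ^ 2 ≤ s ^ 2 := by nlinarith
  have key : ((1 / 2) * A + 1 / 2) ^ 2 + ((1 / 2) * B + s / 2) ^ 2 < 1 := by
    nlinarith [sq_nonneg (3 * B - s), sq_nonneg (4 * A - 3)]
  have hpos : (0:ℝ) < 1 := one_pos
  rw [show ((1 / 2) * A + 1 / 2) ^ 2 + ((1 / 2) * B + s / 2) ^ 2 =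
    ((1 / 2) * A + 1 / 2) ^ 2 + ((1 / 2) * B + s / 2) ^ 2 from rfl] at key
  have := (Real.sqrt_lt' hpos).mpr (by simpa using key)
  simpa using this
end
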